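/- Let 0 < α < 1. There exists a constant c_α depending only on α such that for all integers 0 ≤ k < l, every x ∈ I_{l+1}(e_k + e_l), and every n ∈ ℕ_+, A_n^α |K_n^α(x)| ≤ c_α 2^{αl + k}. -/

import Mathlib

open MeasureTheory Filter Finset
open scoped ENNReal NNReal

noncomputable section

/-- The dyadic group `G = ∏ Z₂`. -/
abbrev G : Type := ℕ → ZMod 2

instance : TopologicalSpace (ZMod 2) := ⊥
instance : DiscreteTopology (ZMod 2) := ⟨rfl⟩
instance : MeasurableSpace (ZMod 2) := ⊤
instance : BorelSpace (ZMod 2) := ⟨borel_eq_top_of_discrete.symm⟩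
instance : ContinuousAdd (ZMod 2) := ⟨continuous_of_discreteTopology⟩
instance : ContinuousNeg (ZMod 2) := ⟨continuous_of_discreteTopology⟩
instance : IsTopologicalAddGroup (ZMod 2) := ⟨⟩

/-- The normalized Haar measure `μ` on the dyadic group `G`. -/
def μG : Measure G := Measure.addHaarMeasure ⊤

/-- The Rademacher functions `r_k(x) = (-1)^{x_k}`. -/
def rad (k : ℕ) (x : G) : ℝ := (-1 : ℝ) ^ (x k).val

/-- The Walsh functions `w_n = ∏_k r_k^{n_k}`, where `n = ∑ n_k 2^k`. -/
def walsh (n : ℕ) (x : G) : ℝ := ∏ k ∈ Finset.range n, rad k x ^ (Nat.testBit n k).toNat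

/-- The Dirichlet kernels `D_n = ∑_{k=0}^{n-1} w_k`. -/
def dirichlet (n : ℕ) (x : G) : ℝ := ∑ k ∈ Finset.range n, walsh k x

/-- The Fejér kernels `K_n = (1/n) ∑_{k=1}^{n} D_k`. -/
def fejer (n : ℕ) (x : G) : ℝ := (n : ℝ)⁻¹ * ∑ k ∈ Finset.Icc 1 n, dirichlet k x

/-- The Cesàro numbers `A_n^α = ((α+1)⋯(α+n))/n!`. -/
def cesA (α : ℝ) (n : ℕ) : ℝ := (∏ i ∈ Finset.range n, (α + i + 1)) / n.factorial

/-- The `(C,α)` kernels `K_n^α = (1/A_n^α) ∑_{k=1}^n A_{n-k}^{α-1} D_k`. -/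
def cesKernel (α : ℝ) (n : ℕ) (x : G) : ℝ :=
  (cesA α n)⁻¹ * ∑ k ∈ Finset.Icc 1 n, cesA (α - 1) (n - k) * dirichlet k x

/-- Walsh–Fourier coefficients of an integrable function. -/
def walshCoeff (f : G → ℝ) (k : ℕ) : ℝ := ∫ x, f x * walsh k x ∂μG

/-- Partial sums `S_m f` of the Walsh–Fourier series. -/
def partialSum (f : G → ℝ) (m : ℕ) (x : G) : ℝ :=
  ∑ k ∈ Finset.range m, walshCoeff f k * walsh k x

/-- The `(C,α)` means `σ_n^α f = (1/A_n^α) ∑_{k=1}^n A_{n-k}^{α-1} S_k f`. -/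
def cesaroMean (α : ℝ) (f : G → ℝ) (n : ℕ) (x : G) : ℝ :=
  (cesA α n)⁻¹ * ∑ k ∈ Finset.Icc 1 n, cesA (α - 1) (n - k) * partialSum f k x

/-- The dyadic interval `I_n(x)`. -/
def dyadicI (n : ℕ) (x : G) : Set G := {y | ∀ i < n, y i = x i}

/-- `e_k ∈ G`: the element whose `k`-th coordinate is `1` and all others `0`. -/
def eG (k : ℕ) : G := fun i => if i = k then 1 else 0

/-- The projection onto the first `n` coordinates. -/
def projG (n : ℕ) : G → (Fin n → ZMod 2) := fun x i => x i

/-- The dyadic filtration `ℱ_n`, generated by the dyadic intervals of length `n`. -/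
def dyadicF : Filtration ℕ (inferInstance : MeasurableSpace G) where
  seq n := MeasurableSpace.comap (projG n) inferInstance
  mono' := by
    intro n m hnm
    have h : projG n = (fun (y : Fin m → ZMod 2) (i : Fin n) => y (Fin.castLE hnm i)) ∘ projG m :=
      rfl
    simp only []
    rw [h, ← MeasurableSpace.comap_comp]
    exact MeasurableSpace.comap_mono
      ((measurable_pi_lambda _ fun i => measurable_pi_apply _).comap_le)
  le' := fun n => (measurable_pi_lambda _ fun i => measurable_pi_apply _).comap_le

/-- The Walsh–Fourier coefficients `F̂(k) = lim_n ∫ F_n w_k dμ` of a martingale. -/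
def martCoeff (F : ℕ → G → ℝ) (k : ℕ) : ℝ :=
  limUnder atTop (fun n => ∫ x, F n x * walsh k x ∂μG)

/-- Partial sums `S_m F` of the Walsh–Fourier series of a martingale. -/
def martSum (F : ℕ → G → ℝ) (m : ℕ) (x : G) : ℝ :=
  ∑ k ∈ Finset.range m, martCoeff F k * walsh k x

/-- The `(C,α)` means of a martingale. -/
def martCesaro (α : ℝ) (F : ℕ → G → ℝ) (n : ℕ) (x : G) : ℝ :=
  (cesA α n)⁻¹ * ∑ k ∈ Finset.Icc 1 n, cesA (α - 1) (n - k) * martSum F k x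

/-- The `L_p(G)` quasi-norm `(∫ |f|^p dμ)^{1/p}`, valued in `ℝ≥0∞`. -/
def LpNormG (p : ℝ) (f : G → ℝ) : ℝ≥0∞ :=
  (∫⁻ x, ENNReal.ofReal |f x| ^ p ∂μG) ^ (1 / p)

/-- The Hardy space quasi-norm `‖F‖_{H_p} = ‖sup_n |F_n|‖_p` of a martingale. -/
def hardyNorm (p : ℝ) (F : ℕ → G → ℝ) : ℝ≥0∞ :=
  (∫⁻ x, (⨆ n, ENNReal.ofReal |F n x|) ^ p ∂μG) ^ (1 / p)

/-- The Hardy quasi-norm of an integrable function, via its generated martingale `(E_n f)`. -/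
def hardyFnNorm (p : ℝ) (f : G → ℝ) : ℝ≥0∞ :=
  hardyNorm p (fun n => μG[f | dyadicF n])


section AuxStatement8

variable {α : ℝ}

lemma cesA_zero : cesA α 0 = 1 := by simp [cesA]

lemma cesA_succ (n : ℕ) : cesA α (n + 1) = cesA α n * ((α + n + 1) / (n + 1)) := by
  have hf : (Nat.factorial n : ℝ) ≠ 0 := Nat.cast_ne_zero.mpr n.factorial_ne_zero
  rw [cesA, cesA, prod_range_succ, Nat.factorial_succ, Nat.cast_mul, div_mul_div_comm]
  push_cast
  rw [mul_comm ((n:ℝ)+1)]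

lemma cesA_pos (hα : -1 < α) (n : ℕ) : 0 < cesA α n := by
  induction n with
  | zero => simp [cesA_zero]
  | succ n ih =>
    rw [cesA_succ]
    apply mul_pos ih
    apply div_pos (by push_cast; linarith [Nat.cast_nonneg (α := ℝ) n]) (by positivity)

lemma cesA_pred_succ (n : ℕ) :
    cesA (α - 1) (n + 1) = cesA α n * (α / (n + 1)) := by
  have hf : (Nat.factorial n : ℝ) ≠ 0 := Nat.cast_ne_zero.mpr n.factorial_ne_zero
  have hn : ((n:ℝ) + 1) ≠ 0 := by positivity
  rw [cesA, cesA, Nat.factorial_succ, Nat.cast_mul, prod_range_succ']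
  have h1 : ∀ i ∈ range n, (α - 1 + ↑(i + 1) + 1) = α + i + 1 := by
    intro i _; push_cast; ring
  rw [prod_congr rfl h1]
  have h2 : (α - 1 + ((0:ℕ):ℝ) + 1) = α := by push_cast; ring
  rw [h2, div_mul_div_comm]
  push_cast
  rw [mul_comm ((n:ℝ)+1)]

lemma cesA_sum (M : ℕ) :
    ∑ j ∈ range (M + 1), cesA (α - 1) j = cesA α M := by
  induction M with
  | zero => simp [cesA, cesA_zero]
  | succ M ih =>
    have hn : ((M:ℝ) + 1) ≠ 0 := by positivity
    rw [sum_range_succ, ih, cesA_pred_succ, cesA_succ]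
    field_simp
    ring

lemma cesA_antitone (hα0 : 0 < α) (hα1 : α < 1) : Antitone (cesA (α - 1)) := by
  apply antitone_nat_of_succ_le
  intro n
  rw [cesA_succ]
  have h := cesA_pos (α := α - 1) (by linarith) n
  have h2 : (α - 1 + n + 1) / (n + 1) ≤ 1 := by
    rw [div_le_one (by positivity)]; linarith
  nlinarith

lemma step_real (hα0 : 0 < α) (hα1 : α < 1) {I : ℝ} (hI : 1 ≤ I) :
    (α + I) / I ≤ Real.exp (1/(I*(I+1))) * ((I+1)/I) ^ α := by
  have hIpos : (0:ℝ) < I := by linarith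
  have hq0 : (0:ℝ) < (I+1)/I := by positivity
  set p : ℝ := ((I+1)/I) ^ α with hp
  set q : ℝ := ((I+1)/I) ^ (1-α) with hq
  have hppos : 0 < p := Real.rpow_pos_of_pos hq0 _
  have hqpos : 0 < q := Real.rpow_pos_of_pos hq0 _
  have hpq : p * q = (I+1)/I := by
    rw [hp, hq, ← Real.rpow_add hq0]
    norm_num
  have hb : q ≤ (I+1-α)/I := by
    have h1 : ((1:ℝ) + 1/I) ^ (1-α) ≤ 1 + (1-α) * (1/I) :=
      rpow_one_add_le_one_add_mul_self ((by norm_num : (-1:ℝ) ≤ 0).trans (by positivity)) (by linarith) (by linarith)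
    have e1 : (1:ℝ) + 1/I = (I+1)/I := by field_simp
    have e2 : (1:ℝ) + (1-α) * (1/I) = (I+1-α)/I := by field_simp; ring
    rw [e1, e2] at h1
    exact h1
  have h5 : (0:ℝ) < I + 1 - α := by linarith
  have key : (I+1)/(I+1-α) ≤ p := by
    rw [div_le_iff₀ h5]
    have hIq : I * q ≤ I + 1 - α := by
      rw [le_div_iff₀ hIpos] at hb; nlinarith [hb]
    have hpqI : p * (I * q) = I + 1 := by
      have : p * q * I = (I+1)/I * I := by rw [hpq]
      rw [div_mul_cancel₀] at this
      · linarith [this]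
      · positivity
    nlinarith [mul_le_mul_of_nonneg_left hIq hppos.le]
  set ε : ℝ := 1/(I*(I+1)) with hε
  have hexp : 1 + ε ≤ Real.exp ε := by
    have := Real.add_one_le_exp ε; linarith
  have hmain' : (α + I) * (I+1-α) ≤ Real.exp ε * (I*(I+1)) := by
    have heq : (α + I) * (I+1-α) = I*(I+1) + α*(1-α) := by ring
    have hsmall : α*(1-α) ≤ 1 := by nlinarith
    have hIIpos : (0:ℝ) < I*(I+1) := by positivity
    have : (1 + ε) * (I*(I+1)) = I*(I+1) + 1 := by
      rw [hε]; field_simp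
    nlinarith [mul_le_mul_of_nonneg_right hexp hIIpos.le]
  calc (α + I)/I ≤ Real.exp ε * ((I+1)/(I+1-α)) := by
        rw [div_le_iff₀ hIpos, mul_comm (Real.exp ε), div_mul_eq_mul_div, div_mul_eq_mul_div,
          le_div_iff₀ h5]
        nlinarith [hmain']
    _ ≤ Real.exp ε * p :=
        mul_le_mul_of_nonneg_left key (Real.exp_pos ε).le

lemma sum_tele (m : ℕ) : ∑ i ∈ range m, (1:ℝ)/(((i:ℝ)+1)*((i:ℝ)+2)) ≤ 1 := by
  have key : ∀ m : ℕ, ∑ i ∈ range m, (1:ℝ)/(((i:ℝ)+1)*((i:ℝ)+2)) = 1 - 1/((m:ℝ)+1) := by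
    intro m
    induction m with
    | zero => simp
    | succ m ih =>
      rw [sum_range_succ, ih]
      have h1 : ((m:ℝ)+1) ≠ 0 := by positivity
      have h2 : ((m:ℝ)+2) ≠ 0 := by positivity
      push_cast
      field_simp
      ring
  rw [key]
  have : (0:ℝ) ≤ 1/((m:ℝ)+1) := by positivity
  linarith

lemma cesA_le_rpow (hα0 : 0 < α) (hα1 : α < 1) (m : ℕ) :
    cesA α m ≤ 3 * ((m:ℝ)+1) ^ α := by
  have main : cesA α m ≤
      Real.exp (∑ i ∈ range m, (1:ℝ)/(((i:ℝ)+1)*((i:ℝ)+2))) * ((m:ℝ)+1) ^ α := by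
    induction m with
    | zero => simp [cesA_zero]
    | succ m ih =>
      have hstep := step_real hα0 hα1 (I := (m:ℝ)+1) (by linarith [Nat.cast_nonneg (α := ℝ) m])
      have e1 : (α + ((m:ℝ)+1))/((m:ℝ)+1) = (α + (m:ℝ) + 1)/((m:ℝ)+1) := by ring_nf
      have e2 : (((m:ℝ)+1)+1)/((m:ℝ)+1) = ((m:ℝ)+2)/((m:ℝ)+1) := by ring_nf
      have e3 : ((m:ℝ)+1)*(((m:ℝ)+1)+1) = ((m:ℝ)+1)*((m:ℝ)+2) := by ring
      rw [e1, e2, e3] at hstep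
      set S := ∑ i ∈ range m, (1:ℝ)/(((i:ℝ)+1)*((i:ℝ)+2)) with hS
      set ε := (1:ℝ)/(((m:ℝ)+1)*((m:ℝ)+2)) with hε
      have hA : 0 ≤ (α + (m:ℝ) + 1) / ((m:ℝ) + 1) := by positivity
      have hcs := cesA_pos (by linarith : (-1:ℝ) < α) m
      have hmn : ∑ i ∈ range (m+1), (1:ℝ)/(((i:ℝ)+1)*((i:ℝ)+2)) = S + ε := by
        rw [sum_range_succ]
      rw [hmn, cesA_succ]
      calc cesA α m * ((α + m + 1)/(m+1))
          ≤ (Real.exp S * ((m:ℝ)+1) ^ α) * (Real.exp ε * (((m:ℝ)+2)/((m:ℝ)+1)) ^ α) := by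
            apply mul_le_mul ih hstep hA
            positivity
        _ = (Real.exp S * Real.exp ε) * (((m:ℝ)+1) ^ α * (((m:ℝ)+2)/((m:ℝ)+1)) ^ α) := by
            ring
        _ = Real.exp (S + ε) * (((m:ℝ)+2)) ^ α := by
            rw [← Real.mul_rpow (by positivity) (by positivity), ← Real.exp_add]
            have : ((m:ℝ)+1) * (((m:ℝ)+2)/((m:ℝ)+1)) = (m:ℝ)+2 := by field_simp
            rw [this]
        _ = Real.exp (S + ε) * ((↑(m+1):ℝ)+1) ^ α := by
            push_cast
            ring_nf
  refine main.trans ?_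
  apply mul_le_mul_of_nonneg_right _ (by positivity)
  calc Real.exp _ ≤ Real.exp 1 := Real.exp_le_exp.mpr (sum_tele m)
    _ ≤ 3 := by have := Real.exp_one_lt_d9; linarith

variable (x : G)

lemma abs_rad (j : ℕ) : |rad j x| = 1 := by
  rw [rad, abs_pow, abs_neg, abs_one, one_pow]

lemma abs_walsh (m : ℕ) : |walsh m x| = 1 := by
  rw [walsh, Finset.abs_prod]
  apply Finset.prod_eq_one
  intro i _
  rw [abs_pow, abs_rad, one_pow]

lemma walsh_eq_prod {m t : ℕ} (h : m < 2 ^ t) :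
    walsh m x = ∏ i ∈ range t, rad i x ^ (Nat.testBit m i).toNat := by
  have key : ∀ i, i ∉ range m ∨ i ∉ range t → rad i x ^ (Nat.testBit m i).toNat = 1 := by
    intro i hi
    have hbit : Nat.testBit m i = false := by
      apply Nat.testBit_lt_two_pow
      rcases hi with hi | hi
      · simp only [mem_range, not_lt] at hi
        calc m < 2 ^ m := Nat.lt_two_pow_self
          _ ≤ 2 ^ i := Nat.pow_le_pow_right (by norm_num) hi
      · simp only [mem_range, not_lt] at hi
        calc m < 2 ^ t := h
          _ ≤ 2 ^ i := Nat.pow_le_pow_right (by norm_num) hi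
    rw [hbit]
    simp
  rw [walsh]
  rcases le_total m t with hmt | hmt
  · apply Finset.prod_subset (range_subset_range.mpr hmt)
    intro i hit him
    exact key i (Or.inl him)
  · symm
    apply Finset.prod_subset (range_subset_range.mpr hmt)
    intro i him hit
    exact key i (Or.inr hit)

lemma walsh_two_pow (s : ℕ) : walsh (2 ^ s) x = rad s x := by
  rw [walsh_eq_prod x (show 2^s < 2^(s+1) by exact Nat.pow_lt_pow_succ (by norm_num))]
  rw [Finset.prod_eq_single s]
  · rw [Nat.testBit_two_pow_self]; simp
  · intro i _ his
    rw [Nat.testBit_two_pow_of_ne (Ne.symm his)]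
    simp
  · intro hs; exact absurd (self_mem_range_succ s) hs

lemma walsh_two_pow_add {s j : ℕ} (h : j < 2 ^ s) :
    walsh (2 ^ s + j) x = rad s x * walsh j x := by
  have h2 : 2 ^ s + j < 2 ^ (s + 1) := by
    have : 2 ^ (s+1) = 2 ^ s + 2 ^ s := by rw [pow_succ]; ring
    omega
  rw [walsh_eq_prod x h2, Finset.prod_range_succ]
  have hs : Nat.testBit (2 ^ s + j) s = true := by
    rw [Nat.testBit_two_pow_add_eq, Nat.testBit_lt_two_pow h]
    rfl
  rw [hs]
  have hsml : ∀ i ∈ range s, rad i x ^ (Nat.testBit (2^s + j) i).toNat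
      = rad i x ^ (Nat.testBit j i).toNat := by
    intro i hi
    rw [Nat.testBit_two_pow_add_gt (mem_range.mp hi)]
  rw [Finset.prod_congr rfl hsml, ← walsh_eq_prod x h]
  simp [mul_comm]

lemma dirichlet_add {s j : ℕ} (h : j ≤ 2 ^ s) :
    dirichlet (2 ^ s + j) x = dirichlet (2 ^ s) x + rad s x * dirichlet j x := by
  rw [dirichlet, Finset.sum_range_add, ← dirichlet]
  congr 1
  rw [dirichlet, Finset.mul_sum]
  apply Finset.sum_congr rfl
  intro i hi
  exact walsh_two_pow_add x (lt_of_lt_of_le (mem_range.mp hi) h)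

lemma dirichlet_two_pow (s : ℕ) : dirichlet (2 ^ s) x = ∏ i ∈ range s, (1 + rad i x) := by
  induction s with
  | zero => simp [dirichlet, walsh]
  | succ s ih =>
    have h2 : 2 ^ (s+1) = 2 ^ s + 2 ^ s := by rw [pow_succ]; ring
    rw [h2, dirichlet_add x le_rfl, ih, Finset.prod_range_succ]
    ring

lemma abs_dirichlet_le (m : ℕ) : |dirichlet m x| ≤ m := by
  rw [dirichlet]
  calc |∑ k ∈ range m, walsh k x| ≤ ∑ k ∈ range m, |walsh k x| := Finset.abs_sum_le_sum_abs _ _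
    _ = ∑ k ∈ range m, 1 := by
        apply Finset.sum_congr rfl; intro i _; exact abs_walsh x i
    _ = m := by simp

section xfact
variable {k l : ℕ} (hkl : k < l) {x : G} (hx : x ∈ dyadicI (l+1) (eG k + eG l))

include hkl hx

lemma rad_k : rad k x = -1 := by
  have h1 : x k = 1 := by
    have := hx k (by omega)
    rw [this]
    show eG k k + eG l k = 1
    rw [eG, eG]
    simp [Nat.ne_of_lt hkl]
  rw [rad, h1, show (1 : ZMod 2).val = 1 from rfl]
  norm_num

lemma rad_l : rad l x = -1 := by
  have h1 : x l = 1 := by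
    have := hx l (by omega)
    rw [this]
    show eG k l + eG l l = 1
    rw [eG, eG]
    simp [(Nat.ne_of_lt hkl).symm]
  rw [rad, h1, show (1 : ZMod 2).val = 1 from rfl]
  norm_num

lemma dpow_eq_zero {s : ℕ} (hs : k < s) : dirichlet (2 ^ s) x = 0 := by
  rw [dirichlet_two_pow]
  apply Finset.prod_eq_zero (mem_range.mpr hs)
  rw [rad_k hkl hx]
  ring

lemma abs_dirichlet_bound (m : ℕ) : |dirichlet m x| ≤ 2 ^ (k+1) := by
  induction m using Nat.strong_induction_on with
  | _ m ih =>
    by_cases hm : m ≤ 2 ^ (k+1)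
    · calc |dirichlet m x| ≤ m := abs_dirichlet_le x m
        _ ≤ (2:ℝ) ^ (k+1) := by exact_mod_cast hm
    · push_neg at hm
      have hm0 : m ≠ 0 := by
        have : 0 < 2 ^ (k+1) := Nat.pow_pos (by norm_num)
        omega
      set s := Nat.log 2 m with hs
      have h1 : 2 ^ s ≤ m := Nat.pow_log_le_self 2 hm0
      have h2 : m < 2 ^ (s + 1) := Nat.lt_pow_succ_log_self (by norm_num) m
      set t := m - 2 ^ s with ht
      have htlt : t < 2 ^ s := by
        have : 2 ^ (s+1) = 2 ^ s + 2 ^ s := by rw [pow_succ]; ring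
        omega
      have htm : t < m := by
        have : 0 < 2 ^ s := Nat.pow_pos (by norm_num)
        omega
      have hks : k < s := by
        have : 2 ^ (k+1) < 2 ^ (s+1) := lt_trans hm h2
        have := Nat.pow_lt_pow_iff_right (a := 2) (by norm_num) |>.mp this
        omega
      have hdec : m = 2 ^ s + t := by omega
      rw [hdec, dirichlet_add x (le_of_lt htlt), dpow_eq_zero hkl hx hks, zero_add,
        abs_mul, abs_rad, one_mul]
      exact ih t htm

lemma dirichlet_flip (m : ℕ) (hm : m % 2 ^ (l+1) < 2 ^ l) :
    dirichlet (m + 2 ^ l) x = - dirichlet m x := by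
  induction m using Nat.strong_induction_on with
  | _ m ih =>
    by_cases hsmall : m < 2 ^ l
    · rw [add_comm, dirichlet_add x (le_of_lt hsmall), dpow_eq_zero hkl hx hkl,
        rad_l hkl hx, zero_add]
      ring
    · push_neg at hsmall
      have hbig : 2 ^ (l+1) ≤ m := by
        by_contra hc
        push_neg at hc
        rw [Nat.mod_eq_of_lt hc] at hm
        omega
      have hm0 : m ≠ 0 := by
        have : 0 < 2 ^ (l+1) := Nat.pow_pos (by norm_num)
        omega
      set s := Nat.log 2 m with hs
      have h1 : 2 ^ s ≤ m := Nat.pow_log_le_self 2 hm0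
      have h2 : m < 2 ^ (s + 1) := Nat.lt_pow_succ_log_self (by norm_num) m
      set t := m - 2 ^ s with ht
      have htlt : t < 2 ^ s := by
        have : 2 ^ (s+1) = 2 ^ s + 2 ^ s := by rw [pow_succ]; ring
        omega
      have htm : t < m := by
        have : 0 < 2 ^ s := Nat.pow_pos (by norm_num)
        omega
      have hls : l + 1 ≤ s := by
        have : 2 ^ (l+1) < 2 ^ (s+1) := lt_of_le_of_lt hbig h2
        have := Nat.pow_lt_pow_iff_right (a := 2) (by norm_num) |>.mp this
        omega
      have hks : k < s := by omega
      have hdvd : 2 ^ (l+1) ∣ 2 ^ s := pow_dvd_pow 2 hls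
      obtain ⟨c, hc⟩ := hdvd
      have hdec : m = 2 ^ s + t := by omega
      have htmod : t % 2 ^ (l+1) = m % 2 ^ (l+1) := by
        conv_rhs => rw [hdec, hc]
        rw [Nat.mul_add_mod]
      have htmod' : t % 2 ^ (l+1) < 2 ^ l := by rw [htmod]; exact hm
      have hP2 : 2 ^ (l+1) = 2 ^ l + 2 ^ l := by rw [pow_succ]; ring
      have hPpos : 0 < 2 ^ (l+1) := Nat.pow_pos (by norm_num)
      have hda : 2^(l+1) * (t / 2^(l+1)) + t % 2^(l+1) = t := Nat.div_add_mod t _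
      have hdb : 2^(l+1) * (t / 2^(l+1)) + 2^(l+1) ≤ 2 ^ s := by
        have h6 : t / 2^(l+1) < c := by
          rw [Nat.div_lt_iff_lt_mul hPpos]
          calc t < 2 ^ s := htlt
            _ = c * 2^(l+1) := by rw [hc]; ring
        calc 2^(l+1) * (t / 2^(l+1)) + 2^(l+1) = 2^(l+1) * (t / 2^(l+1) + 1) := by ring
          _ ≤ 2^(l+1) * c := Nat.mul_le_mul_left _ h6
          _ = 2 ^ s := by rw [hc]
      have htL : t + 2 ^ l < 2 ^ s := by omega
      have hmadd : m + 2 ^ l = 2 ^ s + (t + 2 ^ l) := by omega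
      rw [hmadd, dirichlet_add x (le_of_lt htL), hdec,
        dirichlet_add x (le_of_lt htlt), dpow_eq_zero hkl hx hks,
        ih t htm htmod']
      ring
end xfact
end AuxStatement8

section AuxStatement8b
lemma mod_shift {L P m : ℕ} (hP : P = L + L) (h : m % P < L) :
    (m + L) % P = m % P + L := by
  have hPpos : 0 < P := by omega
  have h1 : P * (m / P) + m % P = m := Nat.div_add_mod m P
  have h2 : m + L = P * (m / P) + (m % P + L) := by omega
  rw [h2, Nat.mul_add_mod]
  exact Nat.mod_eq_of_lt (by omega)

lemma mod_unshift {L P m : ℕ} (hP : P = L + L) (hL : 0 < L) (hm : L ≤ m % P) :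
    (m - L) % P = m % P - L := by
  have hPpos : 0 < P := by omega
  have hmP : m % P < P := Nat.mod_lt _ hPpos
  have h1 : P * (m / P) + m % P = m := Nat.div_add_mod m P
  have h2 : m - L = P * (m / P) + (m % P - L) := by omega
  rw [h2, Nat.mul_add_mod]
  exact Nat.mod_eq_of_lt (by omega)

lemma tail_diff_sum {a : ℕ → ℝ} (ha0 : ∀ j, 0 ≤ a j) (hmono : Antitone a)
    (L M : ℕ) : ∑ j ∈ range M, (a j - a (j + L)) ≤ ∑ j ∈ range L, a j := by
  rw [Finset.sum_sub_distrib]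
  have hshift : ∑ j ∈ range M, a (j + L) = ∑ j ∈ Ico L (M + L), a j := by
    rw [Finset.sum_Ico_eq_sum_range]
    have : M + L - L = M := by omega
    rw [this]
    exact Finset.sum_congr rfl (fun i _ => by rw [add_comm])
  rw [hshift]
  rcases le_total M L with hML | hML
  · have h1 : ∑ j ∈ range M, a j ≤ ∑ j ∈ range L, a j := by
      apply Finset.sum_le_sum_of_subset_of_nonneg (range_subset_range.mpr hML)
      intro i _ _; exact ha0 i
    have h2 : (0:ℝ) ≤ ∑ j ∈ Ico L (M + L), a j := Finset.sum_nonneg (fun i _ => ha0 i)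
    linarith
  · have h1 : ∑ j ∈ range M, a j = ∑ j ∈ range L, a j + ∑ j ∈ Ico L M, a j := by
      rw [Finset.range_eq_Ico, Finset.range_eq_Ico]
      exact (Finset.sum_Ico_consecutive a (Nat.zero_le L) hML).symm
    have h2 : ∑ j ∈ Ico L M, a j ≤ ∑ j ∈ Ico L (M + L), a j := by
      apply Finset.sum_le_sum_of_subset_of_nonneg (Finset.Ico_subset_Ico le_rfl (by omega))
      intro i _ _; exact ha0 i
    linarith

lemma sum_bound {a d : ℕ → ℝ} {D : ℝ} (hD : 0 ≤ D) {L P n : ℕ}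
    (hP : P = L + L) (hL : 0 < L)
    (ha0 : ∀ j, 0 ≤ a j) (hmono : Antitone a) (ha1 : a 0 = 1)
    (hd : ∀ m, |d m| ≤ D) (hflip : ∀ m, m % P < L → d (m + L) = - d m) :
    |∑ m ∈ Icc 1 n, a (n - m) * d m| ≤ D * (2 * ∑ j ∈ range L, a j + 1) := by
  classical
  set f : ℕ → ℝ := fun m => a (n - m) * d m with hf
  set F : Finset ℕ := Icc 1 n with hF
  set B : Finset ℕ := F.filter (fun m => m % P < L ∧ m + L ≤ n) with hB
  set R0 : Finset ℕ := F.filter (fun m => m % P < L ∧ ¬(m + L ≤ n)) with hR0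
  set T : Finset ℕ := F.filter (fun m => ¬(m % P < L) ∧ m = L) with hT
  set B' : Finset ℕ := F.filter (fun m => ¬(m % P < L) ∧ m ≠ L) with hB'
  have hsplit : ∑ m ∈ F, f m = (∑ m ∈ B, f m + ∑ m ∈ B', f m)
      + ∑ m ∈ R0, f m + ∑ m ∈ T, f m := by
    rw [← Finset.sum_filter_add_sum_filter_not F (fun m => m % P < L) f]
    have e1 : ∑ m ∈ F.filter (fun m => m % P < L), f m = ∑ m ∈ B, f m + ∑ m ∈ R0, f m := by
      rw [← Finset.sum_filter_add_sum_filter_not (F.filter (fun m => m % P < L))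
        (fun m => m + L ≤ n) f, Finset.filter_filter, Finset.filter_filter]
    have e2 : ∑ m ∈ F.filter (fun m => ¬(m % P < L)), f m
        = ∑ m ∈ T, f m + ∑ m ∈ B', f m := by
      rw [← Finset.sum_filter_add_sum_filter_not (F.filter (fun m => ¬(m % P < L)))
        (fun m => m = L) f, Finset.filter_filter, Finset.filter_filter]
    rw [e1, e2]
    ring
  have himg : B' = B.image (· + L) := by
    ext m
    simp only [hB', hB, Finset.mem_filter, Finset.mem_image, Finset.mem_Icc, hF]
    constructor
    · rintro ⟨⟨hm1, hmn⟩, hmod, hne⟩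
      push_neg at hmod
      have hmL : L ≤ m := by
        by_contra hc
        push_neg at hc
        rw [Nat.mod_eq_of_lt (by omega)] at hmod
        omega
      have hmgt : L < m := by omega
      refine ⟨m - L, ⟨⟨by omega, by omega⟩, ⟨?_, by omega⟩⟩, by omega⟩
      rw [mod_unshift hP hL hmod]
      have : m % P < P := Nat.mod_lt _ (by omega)
      omega
    · rintro ⟨m', ⟨⟨⟨h1, h2⟩, ⟨hmod, hle⟩⟩, rfl⟩⟩
      refine ⟨⟨by omega, by omega⟩, ?_, by omega⟩
      rw [mod_shift hP hmod]
      omega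
  have hpairsum : ∑ m ∈ B, f m + ∑ m ∈ B', f m
      = ∑ m ∈ B, (a (n - m) - a (n - m - L)) * d m := by
    rw [himg, Finset.sum_image (fun m _ m' _ h => by omega)]
    rw [← Finset.sum_add_distrib]
    apply Finset.sum_congr rfl
    intro m hm
    simp only [hB, Finset.mem_filter] at hm
    have hflipm := hflip m hm.2.1
    have : n - (m + L) = n - m - L := by omega
    rw [hf]
    simp only []
    rw [this, hflipm]
    ring
  have habs1 : |∑ m ∈ B, (a (n - m) - a (n - m - L)) * d m|
      ≤ D * ∑ m ∈ B, (a (n - m - L) - a (n - m)) := by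
    calc |∑ m ∈ B, (a (n - m) - a (n - m - L)) * d m|
        ≤ ∑ m ∈ B, |(a (n - m) - a (n - m - L)) * d m| := Finset.abs_sum_le_sum_abs _ _
      _ ≤ ∑ m ∈ B, (a (n - m - L) - a (n - m)) * D := by
          apply Finset.sum_le_sum
          intro m hm
          rw [abs_mul]
          have hle : a (n - m) ≤ a (n - m - L) := hmono (by omega)
          have : |a (n - m) - a (n - m - L)| = a (n - m - L) - a (n - m) := by
            rw [abs_sub_comm]; exact abs_of_nonneg (by linarith)
          rw [this]
          exact mul_le_mul_of_nonneg_left (hd m) (by linarith)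
      _ = D * ∑ m ∈ B, (a (n - m - L) - a (n - m)) := by
          rw [← Finset.sum_mul]; ring
  have hBsum : ∑ m ∈ B, (a (n - m - L) - a (n - m)) ≤ ∑ j ∈ range L, a j := by
    have hterm : ∀ m ∈ B, a (n - m - L) - a (n - m)
        = a (n - m - L) - a ((n - m - L) + L) := by
      intro m hm
      simp only [hB, Finset.mem_filter, Finset.mem_Icc, hF] at hm
      have : n - m - L + L = n - m := by omega
      rw [this]
    rw [Finset.sum_congr rfl hterm]
    rw [← Finset.sum_image (f := fun j => a j - a (j + L)) (g := fun m => n - m - L)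
      (fun m1 hm1 m2 hm2 h => by
        simp only [Finset.mem_coe, hB, Finset.mem_filter, Finset.mem_Icc, hF] at hm1 hm2
        obtain ⟨⟨a1, a2⟩, a3, a4⟩ := hm1
        obtain ⟨⟨b1, b2⟩, b3, b4⟩ := hm2
        simp only at h
        omega)]
    calc ∑ j ∈ B.image (fun m => n - m - L), (a j - a (j + L))
        ≤ ∑ j ∈ range (n - L), (a j - a (j + L)) := by
          apply Finset.sum_le_sum_of_subset_of_nonneg
          · intro j hj
            simp only [Finset.mem_image, hB, Finset.mem_filter, Finset.mem_Icc, hF] at hj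
            obtain ⟨m, ⟨⟨hm1, hm2⟩, _, hm3⟩, rfl⟩ := hj
            simp only [Finset.mem_range]
            omega
          · intro j _ _
            have : a (j + L) ≤ a j := hmono (by omega)
            linarith
      _ ≤ ∑ j ∈ range L, a j := tail_diff_sum ha0 hmono L (n - L)
  have hR0abs : |∑ m ∈ R0, f m| ≤ D * ∑ j ∈ range L, a j := by
    calc |∑ m ∈ R0, f m| ≤ ∑ m ∈ R0, |f m| := Finset.abs_sum_le_sum_abs _ _
      _ ≤ ∑ m ∈ R0, a (n - m) * D := by
          apply Finset.sum_le_sum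
          intro m hm
          rw [hf]
          simp only []
          rw [abs_mul, abs_of_nonneg (ha0 _)]
          exact mul_le_mul_of_nonneg_left (hd m) (ha0 _)
      _ = D * ∑ m ∈ R0, a (n - m) := by rw [← Finset.sum_mul]; ring
      _ ≤ D * ∑ j ∈ range L, a j := by
          apply mul_le_mul_of_nonneg_left _ hD
          rw [← Finset.sum_image (f := a) (g := fun m => n - m)
            (fun m1 hm1 m2 hm2 h => by
              simp only [Finset.mem_coe, hR0, Finset.mem_filter, Finset.mem_Icc, hF] at hm1 hm2
              obtain ⟨⟨a1, a2⟩, a3, a4⟩ := hm1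
              obtain ⟨⟨b1, b2⟩, b3, b4⟩ := hm2
              simp only at h
              omega)]
          apply Finset.sum_le_sum_of_subset_of_nonneg
          · intro j hj
            simp only [Finset.mem_image, hR0, Finset.mem_filter, Finset.mem_Icc, hF] at hj
            obtain ⟨m, ⟨⟨hm1, hm2⟩, _, hm3⟩, rfl⟩ := hj
            simp only [Finset.mem_range]
            omega
          · intro j _ _
            exact ha0 j
  have hTabs : |∑ m ∈ T, f m| ≤ D := by
    have hTsub : T ⊆ {L} := by
      intro m hm
      simp only [hT, Finset.mem_filter] at hm
      simp [hm.2.2]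
    calc |∑ m ∈ T, f m| ≤ ∑ m ∈ T, |f m| := Finset.abs_sum_le_sum_abs _ _
      _ ≤ ∑ m ∈ ({L} : Finset ℕ), |f m| :=
          Finset.sum_le_sum_of_subset_of_nonneg hTsub (fun i _ _ => abs_nonneg _)
      _ = |f L| := Finset.sum_singleton _ _
      _ ≤ D := by
          rw [hf]
          simp only []
          rw [abs_mul, abs_of_nonneg (ha0 _)]
          have h1 : a (n - L) ≤ 1 := by rw [← ha1]; exact hmono (Nat.zero_le _)
          have h2 := mul_le_mul h1 (hd L) (abs_nonneg _) (by norm_num : (0:ℝ) ≤ 1)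
          linarith [h2]
  rw [hsplit, hpairsum]
  have h3abs : |∑ m ∈ B, (a (n-m) - a (n-m-L)) * d m + ∑ m ∈ R0, f m + ∑ m ∈ T, f m|
      ≤ |∑ m ∈ B, (a (n-m) - a (n-m-L)) * d m| + |∑ m ∈ R0, f m| + |∑ m ∈ T, f m| :=
    abs_add_three _ _ _
  have hB2 : D * ∑ m ∈ B, (a (n-m-L) - a (n-m)) ≤ D * ∑ j ∈ range L, a j :=
    mul_le_mul_of_nonneg_left hBsum hD
  calc |∑ m ∈ B, (a (n-m) - a (n-m-L)) * d m + ∑ m ∈ R0, f m + ∑ m ∈ T, f m|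
      ≤ |∑ m ∈ B, (a (n-m) - a (n-m-L)) * d m| + |∑ m ∈ R0, f m| + |∑ m ∈ T, f m| := h3abs
    _ ≤ D * ∑ j ∈ range L, a j + (D * ∑ j ∈ range L, a j) + D :=
        add_le_add (add_le_add (habs1.trans hB2) hR0abs) hTabs
    _ = D * (2 * ∑ j ∈ range L, a j + 1) := by ring
end AuxStatement8b

/-- `A_n^α |K_n^α(x)| ≤ c_α 2^{αl + k}` for `x ∈ I_{l+1}(e_k + e_l)`, `k < l`. -/
theorem statement8 (α : ℝ) (hα0 : 0 < α) (hα1 : α < 1) :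
    ∃ c : ℝ, 0 < c ∧ ∀ k l : ℕ, k < l → ∀ x ∈ dyadicI (l + 1) (eG k + eG l), ∀ n : ℕ, 1 ≤ n →
      cesA α n * |cesKernel α n x| ≤ c * (2 : ℝ) ^ (α * (l : ℝ)) * 2 ^ k := by
  refine ⟨14, by norm_num, ?_⟩
  intro k l hkl x hx n hn
  have hα1' : (-1:ℝ) < α := by linarith
  have hαm1 : (-1:ℝ) < α - 1 := by linarith
  have hpos : 0 < cesA α n := cesA_pos hα1' n
  set S : ℝ := ∑ m ∈ Finset.Icc 1 n, cesA (α - 1) (n - m) * dirichlet m x with hS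
  have hLHS : cesA α n * |cesKernel α n x| = |S| := by
    rw [cesKernel, abs_mul, abs_inv, abs_of_pos hpos, ← mul_assoc,
      mul_inv_cancel₀ hpos.ne', one_mul]
  set X : ℝ := (2:ℝ) ^ (α * (l:ℝ)) with hX
  have hXeq : X = (((2:ℕ) ^ l : ℕ) : ℝ) ^ α := by
    rw [hX]
    push_cast
    rw [← Real.rpow_natCast (2:ℝ) l, ← Real.rpow_mul (by norm_num), mul_comm]
  have hX1 : 1 ≤ X := by
    rw [hX]
    calc (1:ℝ) = (2:ℝ) ^ (0:ℝ) := (Real.rpow_zero 2).symm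
      _ ≤ (2:ℝ) ^ (α * (l:ℝ)) := Real.rpow_le_rpow_of_exponent_le (by norm_num)
          (by positivity)
  have hL1 : 1 ≤ 2 ^ l := Nat.one_le_two_pow
  have hsum : ∑ j ∈ Finset.range (2 ^ l), cesA (α - 1) j = cesA α (2 ^ l - 1) := by
    have h1 : 2 ^ l - 1 + 1 = 2 ^ l := by omega
    rw [← h1]
    exact cesA_sum _
  have hsumle : ∑ j ∈ Finset.range (2 ^ l), cesA (α - 1) j ≤ 3 * X := by
    rw [hsum]
    have := cesA_le_rpow hα0 hα1 (2 ^ l - 1)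
    have hcast : ((2 ^ l - 1 : ℕ) : ℝ) + 1 = (((2:ℕ) ^ l : ℕ) : ℝ) := by
      have h1 : 2 ^ l - 1 + 1 = 2 ^ l := by omega
      exact_mod_cast congrArg (Nat.cast : ℕ → ℝ) h1
    rw [hcast] at this
    rw [hXeq]
    exact this
  have hmain := sum_bound (a := cesA (α - 1)) (d := fun m => dirichlet m x)
    (D := (2:ℝ) ^ (k + 1)) (by positivity) (P := 2 ^ (l + 1)) (L := 2 ^ l)
    (by rw [pow_succ]; ring) (Nat.pow_pos (by norm_num))
    (fun j => (cesA_pos hαm1 j).le) (cesA_antitone hα0 hα1) cesA_zero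
    (fun m => abs_dirichlet_bound hkl hx m) (fun m hm => dirichlet_flip hkl hx m hm) (n := n)
  rw [hLHS]
  calc |S| ≤ (2:ℝ) ^ (k + 1) * (2 * ∑ j ∈ Finset.range (2 ^ l), cesA (α - 1) j + 1) := hmain
    _ ≤ (2:ℝ) ^ (k + 1) * (2 * (3 * X) + 1) := by
        have h2 : (0:ℝ) ≤ (2:ℝ) ^ (k+1) := by positivity
        have := mul_le_mul_of_nonneg_left (by linarith [hsumle] :
          2 * ∑ j ∈ Finset.range (2 ^ l), cesA (α - 1) j + 1 ≤ 2 * (3 * X) + 1) h2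
        exact this
    _ ≤ (2:ℝ) ^ (k + 1) * (7 * X) := by
        have h2 : (0:ℝ) ≤ (2:ℝ) ^ (k+1) := by positivity
        have : 2 * (3 * X) + 1 ≤ 7 * X := by linarith
        exact mul_le_mul_of_nonneg_left this h2
    _ = 14 * X * 2 ^ k := by rw [pow_succ]; ring


end
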